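/- Let (b_n) be a D-sequence. For each m ∈ ℕ let V_{b,m} = {k ∈ ℤ : for all n, (k/b_n) + ℤ lies in the image of [−1/(4m), 1/(4m)] in ℝ/ℤ}. Then ⋂_{m∈ℕ} V_{b,m} = {0}. -/

import Mathlib

def IsDSeq (b : ℕ → ℕ) : Prop :=
  b 0 = 1 ∧ (∀ n, b n ∣ b (n + 1)) ∧ ∀ n, b n ≠ b (n + 1)

theorem stmt_8 (b : ℕ → ℕ) (hb : IsDSeq b) :
    (⋂ m : ℕ, {k : ℤ | ∀ n : ℕ, ∃ z : ℤ, |(k : ℝ) / b n - z| ≤ 1 / (4 * (m + 1))}) =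
      {(0 : ℤ)} := by
  obtain ⟨hb0, hdvd, hne⟩ := hb
  have hpos : ∀ n, 0 < b n := by
    intro n
    cases n with
    | zero => simp [hb0]
    | succ n =>
      rcases Nat.eq_zero_or_pos (b (n + 1)) with h | h
      case inr => exact h
      · exfalso
        apply hne (n + 1)
        have h2 := hdvd (n + 1)
        rw [h] at h2 ⊢
        exact (zero_dvd_iff.mp h2).symm
  have hlt : ∀ n, b n < b (n + 1) := fun n =>
    Nat.lt_of_le_of_ne (Nat.le_of_dvd (hpos _) (hdvd n)) (hne n)
  have hge : ∀ n, n + 1 ≤ b n := by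
    intro n
    induction n with
    | zero => simp [hb0]
    | succ n ih => exact Nat.lt_of_le_of_lt ih (hlt n)
  ext k
  simp only [Set.mem_iInter, Set.mem_setOf_eq, Set.mem_singleton_iff]
  constructor
  · intro h
    by_contra hk
    set n := k.natAbs with hn
    have hkn : k.natAbs < b n := Nat.lt_of_lt_of_le (Nat.lt_succ_self _) (hge n)
    obtain ⟨z, hz⟩ := h (b n) n
    have hbnR : (0 : ℝ) < (b n : ℝ) := by exact_mod_cast hpos n
    have hknz : k - z * (b n : ℤ) ≠ 0 := by
      intro he
      have hd : (b n : ℤ) ∣ k := ⟨z, by linarith [he]⟩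
      have : (b n : ℤ) ≤ |k| := Int.le_of_dvd (abs_pos.mpr hk) ((dvd_abs _ _).mpr hd)
      rw [Int.abs_eq_natAbs] at this
      omega
    have h1 : (1 : ℤ) ≤ |k - z * (b n : ℤ)| :=
      Int.one_le_abs hknz
    have h1R : (1 : ℝ) ≤ |(k : ℝ) - z * (b n : ℝ)| := by
      have := h1
      calc (1 : ℝ) ≤ ((|k - z * (b n : ℤ)| : ℤ) : ℝ) := by exact_mod_cast h1
        _ = |(k : ℝ) - z * (b n : ℝ)| := by rw [Int.cast_abs]; push_cast; ring_nf
    have heq : (k : ℝ) / (b n : ℝ) - z = ((k : ℝ) - z * (b n : ℝ)) / (b n : ℝ) := by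
      field_simp
    rw [heq, abs_div, abs_of_pos hbnR] at hz
    have hlow : (1 : ℝ) / (b n : ℝ) ≤ |(k : ℝ) - z * (b n : ℝ)| / (b n : ℝ) := by
      gcongr
    have : (1 : ℝ) / (b n : ℝ) ≤ 1 / (4 * ((b n : ℝ) + 1)) := le_trans hlow hz
    rw [div_le_div_iff₀ hbnR (by positivity)] at this
    nlinarith
  · rintro rfl m n
    exact ⟨0, by simp; positivity⟩
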